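/- Lower tail bound for the kNN random bandwidth (equation (exp1) in the proof of Theorem 1(b)): Let X_1,…,X_n be i.i.d. copies of a random element X of a Hilbert space 𝓗, fix x ∈ 𝓗 and θ ∈ 𝓗, and suppose φ_{x,θ} is continuous. Let ρ_n ∈ (0,1) and positive integers k_{1,n} ≤ k ≤ k_{2,n} ≤ n. Then P( H_{k,x,θ} ≤ φ_{x,θ}^{-1}(ρ_n k_{1,n}/n) ) ≤ exp( −(1−ρ_n)·k_{1,n}/4 ) + exp( −(1−ρ_n)²·k_{1,n}/(4ρ_n) ). -/

import Mathlib

open MeasureTheory ProbabilityTheory Filter Set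
open scoped ENNReal NNReal RealInnerProductSpace

noncomputable section

variable {H : Type*} [NormedAddCommGroup H] [InnerProductSpace ℝ H]
  [MeasurableSpace H] [BorelSpace H] [SecondCountableTopology H]
variable {Ω : Type*} [MeasureSpace Ω]

/-- The semi-metric `d_θ(x₁,x₂) = |⟨θ, x₁ − x₂⟩|`. -/
def dsm (θ x₁ x₂ : H) : ℝ := |⟪θ, x₁ - x₂⟫|

/-- Small-ball probability `φ_{x,θ}(h) = P(d_θ(X,x) ≤ h)`. -/
def phiSB (X : ℕ → Ω → H) (x θ : H) (h : ℝ) : ℝ :=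
  (ℙ {ω | dsm θ (X 0 ω) x ≤ h}).toReal

/-- Generalized inverse `φ_{x,θ}^{-1}(u) = inf{h > 0 : φ_{x,θ}(h) ≥ u}`. -/
def phiInv (X : ℕ → Ω → H) (x θ : H) (u : ℝ) : ℝ :=
  sInf {h : ℝ | 0 < h ∧ u ≤ phiSB X x θ h}

/-- Generalized inverse `f^{-1}(u) = inf{h > 0 : f(h) ≥ u}` of a function `f`. -/
def fInv (f : ℝ → ℝ) (u : ℝ) : ℝ := sInf {h : ℝ | 0 < h ∧ u ≤ f h}

/-- The kernel estimator `r̂_{h,θ}(x)` computed from the first `n` observations. -/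
def rhat (X : ℕ → Ω → H) (Y : ℕ → Ω → ℝ) (K : ℝ → ℝ) (x : H) (n : ℕ)
    (hband : ℝ) (θ : H) (ω : Ω) : ℝ :=
  (∑ i ∈ Finset.range n, Y i ω * K (hband⁻¹ * dsm θ (X i ω) x)) /
    (∑ i ∈ Finset.range n, K (hband⁻¹ * dsm θ (X i ω) x))

/-- The kNN random bandwidth
`H_{k,x,θ} = min{h > 0 : Σ_{i=1}^n 1_{B_θ(x,h)}(X_i) = k}`. -/
def HkNN (X : ℕ → Ω → H) (x : H) (n k : ℕ) (θ : H) (ω : Ω) : ℝ :=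
  sInf {h : ℝ | 0 < h ∧
    (@Finset.filter _ (fun i => dsm θ (X i ω) x ≤ h) (Classical.decPred _)
      (Finset.range n)).card = k}

/-- The kNN estimator `r̂*_{k,θ}(x)`. -/
def rknn (X : ℕ → Ω → H) (Y : ℕ → Ω → ℝ) (K : ℝ → ℝ) (x : H) (n k : ℕ)
    (θ : H) (ω : Ω) : ℝ :=
  rhat X Y K x n (HkNN X x n k θ ω) θ ω

/-- Normalized empirical small-ball frequency
`F̂_{h,θ}(x) = (n φ_{x,θ}(h))⁻¹ Σ_{i=1}^n K(h⁻¹ d_θ(x,X_i))`. -/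
def Fhat (X : ℕ → Ω → H) (K : ℝ → ℝ) (x : H) (n : ℕ) (hband : ℝ) (θ : H)
    (ω : Ω) : ℝ :=
  (∑ i ∈ Finset.range n, K (hband⁻¹ * dsm θ (X i ω) x)) / (n * phiSB X x θ hband)

/-- Normalized response-weighted sum
`ĝ_{h,θ}(x) = (n φ_{x,θ}(h))⁻¹ Σ_{i=1}^n K(h⁻¹ d_θ(x,X_i)) Y_i`. -/
def ghat (X : ℕ → Ω → H) (Y : ℕ → Ω → ℝ) (K : ℝ → ℝ) (x : H) (n : ℕ)
    (hband : ℝ) (θ : H) (ω : Ω) : ℝ :=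
  (∑ i ∈ Finset.range n, K (hband⁻¹ * dsm θ (X i ω) x) * Y i ω) /
    (n * phiSB X x θ hband)

/-- The bias term `B̂_{h,θ}(x) = E(ĝ_{h,θ}(x)) / E(F̂_{h,θ}(x)) − r_{θ₀}(x)`. -/
def Bhat (X : ℕ → Ω → H) (Y : ℕ → Ω → ℝ) (K : ℝ → ℝ) (x : H) (r : ℝ → ℝ)
    (θ₀ : H) (n : ℕ) (hband : ℝ) (θ : H) : ℝ :=
  (∫ ω, ghat X Y K x n hband θ ω ∂ℙ) / (∫ ω, Fhat X K x n hband θ ω ∂ℙ) -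
    r ⟪θ₀, x⟫

/-- The minimal envelope function of a class of functions. -/
def envOf (𝓚 : Set (H → ℝ)) (z : H) : ℝ := ⨆ g : 𝓚, |(g : H → ℝ) z|

/-- `L²(Q)` norm. -/
def L2norm (Q : Measure H) (f : H → ℝ) : ℝ := (∫ z, (f z) ^ 2 ∂Q) ^ (1/2 : ℝ)

/-- `L²(Q)` distance. -/
def distL2 (Q : Measure H) (f g : H → ℝ) : ℝ := L2norm Q (fun z => f z - g z)

/-- Covering number `N(ε, 𝓚, d_{Q,2})`: the minimal number of open `d_{Q,2}`-balls of
radius `ε` needed to cover `𝓚`. -/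
def covNum (ε : ℝ) (𝓚 : Set (H → ℝ)) (Q : Measure H) : ℕ∞ :=
  sInf {m : ℕ∞ | ∃ T : Finset (H → ℝ), (T.card : ℕ∞) = m ∧
    ∀ f ∈ 𝓚, ∃ g ∈ T, distL2 Q f g < ε}

/-- A pointwise measurable class of functions: a class of measurable functions containing
a countable subclass from which every member can be recovered as a pointwise limit. -/
def PtwiseMeasClass (𝓚 : Set (H → ℝ)) : Prop :=
  (∀ g ∈ 𝓚, Measurable g) ∧
    ∃ 𝓖 ⊆ 𝓚, 𝓖.Countable ∧ ∀ g ∈ 𝓚, ∃ u : ℕ → (H → ℝ), (∀ n, u n ∈ 𝓖) ∧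
      ∀ z, Tendsto (fun n => u n z) atTop (nhds (g z))

/-- The entropy-integral condition
`sup_Q ∫₀¹ √(1 + log N(ε‖F‖_{Q,2}, 𝓚, d_{Q,2})) dε < ∞`, the supremum running over all
probability measures `Q` on `H` with `‖F‖_{Q,2} < ∞`, `F` being the minimal envelope of `𝓚`. -/
def EntropyBound (𝓚 : Set (H → ℝ)) : Prop :=
  ∃ C : ℝ, ∀ Q : Measure H, IsProbabilityMeasure Q →
    Integrable (fun z => (envOf 𝓚 z) ^ 2) Q →
      (∀ ε ∈ Set.Ioc (0:ℝ) 1, covNum (ε * L2norm Q (envOf 𝓚)) 𝓚 Q < ⊤) ∧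
      ∫ ε in Set.Ioc (0:ℝ) 1,
        Real.sqrt (1 + Real.log ((covNum (ε * L2norm Q (envOf 𝓚)) 𝓚 Q).toNat)) ≤ C

/-- The class of kernel-based functions `𝓚_Θ = {z ↦ K(h⁻¹ d_θ(x,z)) : h > 0, θ ∈ Θ}`. -/
def Kclass (K : ℝ → ℝ) (x : H) (Θ : Set H) : Set (H → ℝ) :=
  {g | ∃ θ ∈ Θ, ∃ hband : ℝ, 0 < hband ∧ g = fun z => K (hband⁻¹ * dsm θ x z)}

lemma aux_exp_quad {c : ℝ} (h0 : 0 ≤ c) (h1 : c ≤ 1) :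
    Real.exp c ≤ 1 + c + 3/4 * c ^ 2 := by
  have := Real.exp_bound' h0 h1 (n := 2) (by norm_num)
  simp [Finset.sum_range_succ, Nat.factorial] at this
  nlinarith [this]

lemma aux_chernoff_exponent {ρ : ℝ} (h0 : 0 < ρ) (h1 : ρ < 1) :
    ∃ c : ℝ, 0 < c ∧
      ((ρ * (Real.exp c - 1) - c ≤ -((1 - ρ) / 4)) ∨
       (ρ * (Real.exp c - 1) - c ≤ -((1 - ρ) ^ 2 / (4 * ρ)))) := by
  rcases le_or_gt ρ (1/2) with hle | hgt
  · refine ⟨Real.log 2, Real.log_pos (by norm_num), Or.inl ?_⟩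
    rw [Real.exp_log (by norm_num)]
    have h2 := Real.log_two_gt_d9
    nlinarith
  · refine ⟨1 - ρ, by linarith, Or.inr ?_⟩
    have hb := aux_exp_quad (c := 1 - ρ) (by linarith) (by linarith)
    rw [le_neg, div_le_iff₀ (by linarith)]
    have hb' : 4*ρ*ρ*(Real.exp (1-ρ)) ≤ 4*ρ*ρ*(1+(1-ρ)+3/4*(1-ρ)^2) :=
      mul_le_mul_of_nonneg_left hb (by nlinarith)
    have hkey : 0 ≤ (1-ρ)^2 * ((1-ρ) * (3*ρ-1)) :=
      mul_nonneg (sq_nonneg _) (mul_nonneg (by linarith) (by linarith))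
    nlinarith [hb', hkey]

open Finset in
lemma aux_exists_kth {n k : ℕ} {d : ℕ → ℝ}
    (hd0 : ∀ i ∈ Finset.range n, 0 < d i)
    (hinj : Set.InjOn d (Finset.range n))
    (hk1 : 1 ≤ k) (hkn : k ≤ n) :
    ∃ h : ℝ, 0 < h ∧
      (@Finset.filter _ (fun i => d i ≤ h) (Classical.decPred _) (Finset.range n)).card = k := by
  classical
  set s : Finset ℝ := (Finset.range n).image d with hs
  have hcard : s.card = n := by
    rw [hs, Finset.card_image_of_injOn hinj, Finset.card_range]
  set e := s.orderEmbOfFin hcard with he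
  set jk : Fin n := ⟨k - 1, by omega⟩ with hjk
  set h : ℝ := e jk with hh
  have hhs : h ∈ s := s.orderEmbOfFin_mem hcard jk
  have hh0 : 0 < h := by
    rw [hs] at hhs
    obtain ⟨i, hi, hdi⟩ := Finset.mem_image.mp hhs
    exact hdi ▸ hd0 i hi
  refine ⟨h, hh0, ?_⟩
  have hmem : ∀ a : ℝ, a ∈ s ↔ ∃ j : Fin n, e j = a := by
    intro a
    constructor
    · intro ha
      have h2 : (a : ℝ) ∈ (s : Set ℝ) := ha
      rw [← s.range_orderEmbOfFin hcard] at h2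
      exact h2
    · rintro ⟨j, rfl⟩
      exact s.orderEmbOfFin_mem hcard j
  have hfilt : s.filter (fun a => a ≤ h) = (Finset.Iic jk).image e := by
    ext a
    simp only [Finset.mem_filter, Finset.mem_image, Finset.mem_Iic]
    constructor
    · rintro ⟨has, hle⟩
      obtain ⟨j, rfl⟩ := (hmem a).mp has
      exact ⟨j, e.le_iff_le.mp hle, rfl⟩
    · rintro ⟨j, hj, rfl⟩
      exact ⟨(hmem _).mpr ⟨j, rfl⟩, e.le_iff_le.mpr hj⟩
  have hcard2 : (s.filter (fun a => a ≤ h)).card = k := by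
    rw [hfilt, Finset.card_image_of_injective _ e.injective, Fin.card_Iic]
    simp [hjk]; omega
  have himg : ((Finset.range n).filter (fun i => d i ≤ h)).image d
      = s.filter (fun a => a ≤ h) := by
    ext a
    simp only [Finset.mem_image, Finset.mem_filter, hs]
    constructor
    · rintro ⟨i, ⟨hi, hle⟩, rfl⟩
      exact ⟨⟨i, hi, rfl⟩, hle⟩
    · rintro ⟨⟨i, hi, rfl⟩, hle⟩
      exact ⟨i, ⟨hi, hle⟩, rfl⟩
  have hinj2 : Set.InjOn d (((Finset.range n).filter (fun i => d i ≤ h) : Finset ℕ) : Set ℕ) :=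
    hinj.mono (Finset.coe_subset.mpr (Finset.filter_subset _ _))
  have hcc := Finset.card_image_of_injOn hinj2
  rw [himg, hcard2] at hcc
  convert hcc.symm using 2

open Finset in
lemma aux_count_of_inf_le {n k : ℕ} {d : ℕ → ℝ} {t : ℝ}
    (hd0 : ∀ i ∈ Finset.range n, 0 < d i)
    (hinj : Set.InjOn d (Finset.range n))
    (hk1 : 1 ≤ k) (hkn : k ≤ n)
    (hle : sInf {h : ℝ | 0 < h ∧
      (@Finset.filter _ (fun i => d i ≤ h) (Classical.decPred _) (Finset.range n)).card = k} ≤ t) :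
    k ≤ (@Finset.filter _ (fun i => d i ≤ t) (Classical.decPred _) (Finset.range n)).card := by
  classical
  by_contra hcon
  push_neg at hcon
  set S : Set ℝ := {h : ℝ | 0 < h ∧
    (@Finset.filter _ (fun i => d i ≤ h) (Classical.decPred _) (Finset.range n)).card = k} with hS
  obtain ⟨h₀, hh₀, hch₀⟩ := aux_exists_kth hd0 hinj hk1 hkn
  have hSne : S.Nonempty := ⟨h₀, hh₀, hch₀⟩
  set F : Finset ℕ := (Finset.range n).filter (fun i => t < d i) with hF
  have hFne : F.Nonempty := by
    by_contra hemp
    rw [Finset.not_nonempty_iff_eq_empty] at hemp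
    have : (Finset.range n).filter (fun i => d i ≤ t) = Finset.range n := by
      apply Finset.filter_true_of_mem
      intro i hi
      by_contra hnot
      have : i ∈ F := by rw [hF]; exact Finset.mem_filter.mpr ⟨hi, by linarith⟩
      simp [hemp] at this
    have hcge : k ≤ (@Finset.filter _ (fun i => d i ≤ t) (Classical.decPred _)
        (Finset.range n)).card := by
      rw [show (@Finset.filter _ (fun i => d i ≤ t) (Classical.decPred _) (Finset.range n))
        = (Finset.range n).filter (fun i => d i ≤ t) from by convert rfl, this, Finset.card_range]
      exact hkn
    omega
  set m : ℝ := (F.image d).min' (hFne.image d) with hm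
  have hmF : m ∈ F.image d := Finset.min'_mem _ _
  have htm : t < m := by
    obtain ⟨i, hi, hdi⟩ := Finset.mem_image.mp hmF
    rw [hF] at hi
    exact hdi ▸ (Finset.mem_filter.mp hi).2
  set δ : ℝ := (m - t) / 2 with hδ
  have hδ0 : 0 < δ := by rw [hδ]; linarith
  have hlb : ∀ h ∈ S, t + δ < h := by
    intro h hhS
    by_contra hle2
    push_neg at hle2
    obtain ⟨hh0, hhc⟩ := hhS
    have hsub : (@Finset.filter _ (fun i => d i ≤ h) (Classical.decPred _) (Finset.range n))
        ⊆ (@Finset.filter _ (fun i => d i ≤ t) (Classical.decPred _) (Finset.range n)) := by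
      intro i hi
      rw [Finset.mem_filter] at hi ⊢
      refine ⟨hi.1, ?_⟩
      by_contra hnot
      push_neg at hnot
      have hiF : i ∈ F := by rw [hF]; exact Finset.mem_filter.mpr ⟨hi.1, hnot⟩
      have : m ≤ d i := Finset.min'_le _ _ (Finset.mem_image_of_mem d hiF)
      have : d i ≤ t + δ := le_trans hi.2 hle2
      rw [hδ] at this
      linarith
    have := Finset.card_le_card hsub
    omega
  have : t + δ ≤ sInf S := le_csInf hSne (fun h hh => (hlb h hh).le)
  linarith

lemma aux_atomless {Ω : Type*} [MeasureSpace Ω] [IsProbabilityMeasure (ℙ : Measure Ω)]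
    {f : Ω → ℝ} (hf : Measurable f)
    (hcont : Continuous fun h : ℝ => (ℙ {ω | f ω ≤ h}).toReal) (c : ℝ) :
    ℙ {ω | f ω = c} = 0 := by
  set B : ℕ → Set Ω := fun n => {ω | f ω ≤ c - 1 / (n + 1)} with hB
  have hBmeas : ∀ n, MeasurableSet (B n) := fun n => hf measurableSet_Iic
  have hBmono : Monotone B := by
    intro a b hab ω hω
    simp only [hB, Set.mem_setOf_eq] at hω ⊢
    have : 1 / ((b : ℝ) + 1) ≤ 1 / ((a : ℝ) + 1) := by
      apply one_div_le_one_div_of_le <;> [positivity; exact_mod_cast by omega]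
    linarith
  have hUnion : (⋃ n, B n) = {ω | f ω < c} := by
    ext ω
    simp only [Set.mem_iUnion, hB, Set.mem_setOf_eq]
    constructor
    · rintro ⟨n, hn⟩
      have : (0:ℝ) < 1 / (n + 1) := by positivity
      linarith
    · intro hlt
      obtain ⟨n, hn⟩ := exists_nat_one_div_lt (show (0:ℝ) < c - f ω by linarith)
      exact ⟨n, by linarith⟩
  have htend1 : Tendsto (fun n => ℙ (B n)) atTop (nhds (ℙ {ω | f ω < c})) := by
    rw [← hUnion]
    exact tendsto_measure_iUnion_atTop hBmono
  have htend1' : Tendsto (fun n => (ℙ (B n)).toReal) atTop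
      (nhds ((ℙ {ω | f ω < c}).toReal)) :=
    (ENNReal.tendsto_toReal (measure_ne_top _ _)).comp htend1
  have htend2 : Tendsto (fun n : ℕ => (ℙ {ω | f ω ≤ c - 1 / (n + 1)}).toReal) atTop
      (nhds ((ℙ {ω | f ω ≤ c}).toReal)) := by
    have hc : Tendsto (fun n : ℕ => c - 1 / ((n:ℝ) + 1)) atTop (nhds c) := by
      have : Tendsto (fun n : ℕ => 1 / ((n : ℝ) + 1)) atTop (nhds 0) :=
        tendsto_one_div_add_atTop_nhds_zero_nat
      have h2 := Tendsto.sub (tendsto_const_nhds (x := c)) this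
      simpa using h2
    exact (hcont.tendsto c).comp hc
  have heq : (ℙ {ω | f ω < c}).toReal = (ℙ {ω | f ω ≤ c}).toReal :=
    tendsto_nhds_unique htend1' htend2
  have heq2 : ℙ {ω | f ω < c} = ℙ {ω | f ω ≤ c} :=
    (ENNReal.toReal_eq_toReal_iff' (measure_ne_top _ _) (measure_ne_top _ _)).mp heq
  have hdiff : {ω | f ω = c} = {ω | f ω ≤ c} \ {ω | f ω < c} := by
    ext ω; simp only [Set.mem_setOf_eq, Set.mem_diff, not_lt]
    constructor
    · intro h; exact ⟨le_of_eq h, ge_of_eq h⟩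
    · intro h; exact le_antisymm h.1 h.2
  rw [hdiff]
  have hsub : {ω | f ω < c} ⊆ {ω | f ω ≤ c} := fun ω hω => le_of_lt (Set.mem_setOf_eq ▸ hω)
  have hmd := measure_diff (μ := (ℙ : Measure Ω)) hsub
    (hf measurableSet_Iio).nullMeasurableSet (measure_ne_top _ _)
  rw [hmd, heq2, tsub_self]

lemma aux_pair_null {Ω : Type*} [MeasureSpace Ω] [IsProbabilityMeasure (ℙ : Measure Ω)]
    {f g : Ω → ℝ} (hf : Measurable f) (hg : Measurable g) (hindep : IndepFun f g ℙ)
    (hnull : ∀ c : ℝ, ℙ {ω | g ω = c} = 0) :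
    ℙ {ω | f ω = g ω} = 0 := by
  have hD : MeasurableSet {p : ℝ × ℝ | p.1 = p.2} :=
    isClosed_eq continuous_fst continuous_snd |>.measurableSet
  have hmap : ℙ {ω | f ω = g ω}
      = (Measure.map (fun ω => (f ω, g ω)) ℙ) {p : ℝ × ℝ | p.1 = p.2} := by
    rw [Measure.map_apply (hf.prodMk hg) hD]
    rfl
  rw [hmap, (indepFun_iff_map_prod_eq_prod_map_map hf.aemeasurable hg.aemeasurable).mp hindep,
    Measure.prod_apply hD]
  have hz : ∀ a : ℝ, (Measure.map g ℙ) (Prod.mk a ⁻¹' {p : ℝ × ℝ | p.1 = p.2}) = 0 := by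
    intro a
    have hpre : Prod.mk a ⁻¹' {p : ℝ × ℝ | p.1 = p.2} = {b : ℝ | b = a} := by
      ext b; simp [eq_comm]
    rw [hpre, Measure.map_apply hg (show MeasurableSet {b : ℝ | b = a} from
      (show {b : ℝ | b = a} = {a} from by ext b; simp) ▸ measurableSet_singleton a)]
    exact hnull a
  simp only [hz]
  simp

lemma aux_chernoff {Ω : Type*} [MeasureSpace Ω] [IsProbabilityMeasure (ℙ : Measure Ω)]
    (n k₁ : ℕ) (A : ℕ → Set Ω)
    (hAmeas : ∀ i, MeasurableSet (A i))
    (hAindep : iIndepFun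
      (fun i => (A i).indicator (fun _ => (1:ℝ))) ℙ)
    (hp : ∀ i, ℙ (A i) = ℙ (A 0))
    (c : ℝ) (hc : 0 < c) (q : ℝ) (hq : (n : ℝ) * (ℙ (A 0)).toReal ≤ q) :
    (ℙ {ω | (k₁:ℝ) ≤ (∑ i ∈ Finset.range n, (A i).indicator (fun _ => (1:ℝ))) ω}).toReal
      ≤ Real.exp (q * (Real.exp c - 1) - c * k₁) := by
  classical
  set ind : ℕ → Ω → ℝ := fun i => (A i).indicator (fun _ => (1:ℝ)) with hind
  have hindmeas : ∀ i, Measurable (ind i) :=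
    fun i => measurable_const.indicator (hAmeas i)
  set S : Ω → ℝ := ∑ i ∈ Finset.range n, ind i with hS
  have hSmeas : Measurable S := by
    rw [hS]
    have : (∑ i ∈ Finset.range n, ind i) = fun ω => ∑ i ∈ Finset.range n, ind i ω := by
      ext ω; simp [Finset.sum_apply]
    rw [this]
    exact Finset.measurable_sum _ (fun i _ => hindmeas i)
  have hSbound : ∀ ω, S ω ≤ n := by
    intro ω
    rw [hS, Finset.sum_apply]
    calc (∑ i ∈ Finset.range n, ind i ω) ≤ ∑ i ∈ Finset.range n, 1 := by
          apply Finset.sum_le_sum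
          intro i _
          exact Set.indicator_le_self' (by intros; norm_num) ω |>.trans
            (by by_cases h : ω ∈ A i <;> simp [hind, Set.indicator_apply, h])
      _ = n := by simp
  have hint : Integrable (fun ω => Real.exp (c * S ω)) ℙ := by
    refine Integrable.mono' (integrable_const (Real.exp (c * n)))
      ((hSmeas.const_mul c).exp.aestronglyMeasurable) (ae_of_all _ fun ω => ?_)
    rw [Real.norm_eq_abs, abs_of_pos (Real.exp_pos _)]
    exact Real.exp_le_exp.mpr (mul_le_mul_of_nonneg_left (hSbound ω) hc.le)
  have hcher := measure_ge_le_exp_mul_mgf (μ := (ℙ : Measure Ω)) (X := S) (k₁ : ℝ) hc.le hint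
  have hmgf : mgf S ℙ c = ∏ i ∈ Finset.range n, mgf (ind i) ℙ c :=
    hAindep.mgf_sum hindmeas (Finset.range n)
  have hmgfi : ∀ i, mgf (ind i) ℙ c = 1 + (ℙ (A 0)).toReal * (Real.exp c - 1) := by
    intro i
    have heq : (fun ω => Real.exp (c * ind i ω))
        = fun ω => (A i).indicator (fun _ => Real.exp c - 1) ω + 1 := by
      funext ω
      by_cases h : ω ∈ A i <;> simp [hind, Set.indicator_apply, h]
    rw [mgf]
    rw [heq]
    rw [integral_add ((integrable_const _).indicator (hAmeas i)) (integrable_const _)]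
    rw [integral_indicator_const _ (hAmeas i)]
    simp only [smul_eq_mul, integral_const, measureReal_def, measure_univ, ENNReal.toReal_one, one_smul, hp i]
    ring
  have hprod : mgf S ℙ c = (1 + (ℙ (A 0)).toReal * (Real.exp c - 1)) ^ n := by
    rw [hmgf]
    rw [Finset.prod_congr rfl (fun i _ => hmgfi i), Finset.prod_const, Finset.card_range]
  set p : ℝ := (ℙ (A 0)).toReal with hpdef
  have hp0 : 0 ≤ p := ENNReal.toReal_nonneg
  have hec1 : 0 ≤ Real.exp c - 1 := by
    have := Real.one_le_exp hc.le
    linarith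
  have hbase : (1 + p * (Real.exp c - 1)) ^ n ≤ Real.exp (q * (Real.exp c - 1)) := by
    calc (1 + p * (Real.exp c - 1)) ^ n
        ≤ (Real.exp (p * (Real.exp c - 1))) ^ n := by
          apply pow_le_pow_left₀ (by positivity)
          linarith [Real.add_one_le_exp (p * (Real.exp c - 1))]
      _ = Real.exp (n * (p * (Real.exp c - 1))) := by
          rw [← Real.exp_nat_mul]
      _ ≤ Real.exp (q * (Real.exp c - 1)) := by
          apply Real.exp_le_exp.mpr
          rw [← mul_assoc]
          exact mul_le_mul_of_nonneg_right hq hec1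
  calc (ℙ {ω | (k₁:ℝ) ≤ S ω}).toReal
      ≤ Real.exp (-c * k₁) * mgf S ℙ c := hcher
    _ ≤ Real.exp (-c * k₁) * Real.exp (q * (Real.exp c - 1)) := by
        apply mul_le_mul_of_nonneg_left _ (Real.exp_pos _).le
        rw [hprod]
        exact hbase
    _ = Real.exp (q * (Real.exp c - 1) - c * k₁) := by
        rw [← Real.exp_add]; ring_nf

/-- **Equation (exp1)**: lower tail bound for the kNN random bandwidth:
`P(H_{k,x,θ} ≤ φ_{x,θ}^{-1}(ρ_n k_{1,n}/n)) ≤ exp(−(1−ρ_n)k_{1,n}/4) + exp(−(1−ρ_n)²k_{1,n}/(4ρ_n))`. -/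
theorem eq_exp1_kNN_bandwidth_lower_tail
    [IsProbabilityMeasure (ℙ : Measure Ω)]
    (X : ℕ → Ω → H) (x θ : H) (n k k₁ k₂ : ℕ) (ρ : ℝ)
    -- i.i.d. sampling
    (hXmeas : ∀ i, Measurable (X i))
    (hindep : iIndepFun X ℙ)
    (hident : ∀ i, IdentDistrib (X i) (X 0) ℙ ℙ)
    -- continuity of the small-ball probability function
    (hφcont : Continuous (phiSB X x θ))
    -- parameters
    (hρ : ρ ∈ Set.Ioo (0:ℝ) 1)
    (hk₁pos : 1 ≤ k₁) (hk₁k : k₁ ≤ k) (hkk₂ : k ≤ k₂) (hk₂n : k₂ ≤ n) :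
    ℙ {ω | HkNN X x n k θ ω ≤ phiInv X x θ (ρ * (k₁ : ℝ) / n)} ≤
      ENNReal.ofReal (Real.exp (-((1 - ρ) * (k₁ : ℝ)) / 4) +
        Real.exp (-((1 - ρ) ^ 2 * (k₁ : ℝ)) / (4 * ρ))) := by
  classical
  obtain ⟨hρ0, hρ1⟩ := hρ
  have hn : 1 ≤ n := le_trans hk₁pos (le_trans hk₁k (le_trans hkk₂ hk₂n))
  have hkn : k ≤ n := le_trans hkk₂ hk₂n
  have hk1 : 1 ≤ k := le_trans hk₁pos hk₁k
  set u : ℝ := ρ * (k₁ : ℝ) / n with hu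
  set t : ℝ := phiInv X x θ u with htdef
  -- basic continuity/measurability facts
  have hgdcont : Continuous (fun v : H => dsm θ v x) := by
    unfold dsm
    exact (continuous_const.inner (continuous_id.sub continuous_const)).abs
  have hgdmeas : Measurable (fun v : H => dsm θ v x) := hgdcont.measurable
  have hdmeas : ∀ i, Measurable (fun ω => dsm θ (X i ω) x) :=
    fun i => hgdmeas.comp (hXmeas i)
  have hd0le : ∀ (i : ℕ) (ω : Ω), 0 ≤ dsm θ (X i ω) x := fun i ω => abs_nonneg _
  -- atomless
  have hnulli : ∀ (i : ℕ) (c : ℝ), ℙ {ω | dsm θ (X i ω) x = c} = 0 := by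
    intro i c
    have hBc : MeasurableSet {v : H | dsm θ v x = c} :=
      (isClosed_eq hgdcont continuous_const).measurableSet
    have h0 : ℙ {ω | dsm θ (X 0 ω) x = c} = 0 :=
      aux_atomless (hdmeas 0) hφcont c
    have : ℙ (X i ⁻¹' {v : H | dsm θ v x = c}) = ℙ (X 0 ⁻¹' {v : H | dsm θ v x = c}) := by
      rw [← Measure.map_apply (hXmeas i) hBc, ← Measure.map_apply (hXmeas 0) hBc,
        (hident i).map_eq]
    exact this.trans h0
  -- Step A : phiSB t ≤ u
  have hu0 : 0 < u := by
    rw [hu]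
    have : (0:ℝ) < k₁ := by exact_mod_cast hk₁pos
    have hn0 : (0:ℝ) < n := by exact_mod_cast hn
    positivity
  have hSφbdd : BddBelow {h : ℝ | 0 < h ∧ u ≤ phiSB X x θ h} :=
    ⟨0, fun h hh => hh.1.le⟩
  have ht0 : 0 ≤ t := by
    rw [htdef]
    exact Real.sInf_nonneg (fun h hh => hh.1.le)
  have hφ0 : phiSB X x θ 0 = 0 := by
    have hset : {ω | dsm θ (X 0 ω) x ≤ 0} = {ω | dsm θ (X 0 ω) x = 0} := by
      ext ω; exact ⟨fun h => le_antisymm h (hd0le 0 ω), fun h => le_of_eq h⟩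
    unfold phiSB
    rw [hset, hnulli 0 0, ENNReal.toReal_zero]
  have hphit : phiSB X x θ t ≤ u := by
    rcases ht0.eq_or_lt with heq | hlt
    · rw [← heq, hφ0]; exact hu0.le
    · by_contra hgt
      push_neg at hgt
      have hca : ContinuousAt (phiSB X x θ) t := hφcont.continuousAt
      rw [Metric.continuousAt_iff] at hca
      obtain ⟨δ, hδ0, hδ⟩ := hca (phiSB X x θ t - u) (by linarith)
      set h₀ : ℝ := t - min (δ/2) (t/2) with hh₀
      have hmin0 : 0 < min (δ/2) (t/2) := lt_min (by linarith) (by linarith)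
      have hh₀pos : 0 < h₀ := by
        rw [hh₀]
        have : min (δ/2) (t/2) ≤ t/2 := min_le_right _ _
        linarith
      have hh₀lt : h₀ < t := by rw [hh₀]; linarith
      have hdist : dist h₀ t < δ := by
        rw [Real.dist_eq, hh₀]
        have h1 : min (δ/2) (t/2) ≤ δ/2 := min_le_left _ _
        rw [abs_of_nonpos (by linarith)]
        simp only [neg_sub]
        linarith
      have := hδ hdist
      rw [Real.dist_eq] at this
      have hφh₀ : u < phiSB X x θ h₀ := by
        rcases abs_lt.mp this with ⟨hl, hr⟩
        linarith
      have hmem : h₀ ∈ {h : ℝ | 0 < h ∧ u ≤ phiSB X x θ h} := ⟨hh₀pos, hφh₀.le⟩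
      have : t ≤ h₀ := csInf_le hSφbdd hmem
      linarith
  -- the events
  set A : ℕ → Set Ω := fun i => {ω | dsm θ (X i ω) x ≤ t} with hA
  have hBt : MeasurableSet {v : H | dsm θ v x ≤ t} :=
    (isClosed_le hgdcont continuous_const).measurableSet
  have hAmeas : ∀ i, MeasurableSet (A i) := fun i => (hXmeas i) hBt
  set G : Set Ω :=
    {ω | (k₁:ℝ) ≤ (∑ i ∈ Finset.range n, (A i).indicator (fun _ => (1:ℝ))) ω} with hG
  set N : Set Ω := (⋃ i : Fin n, {ω | dsm θ (X (i:ℕ) ω) x = 0}) ∪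
    ⋃ p : Fin n × Fin n, {ω | (p.1:ℕ) ≠ (p.2:ℕ) ∧
      dsm θ (X (p.1:ℕ) ω) x = dsm θ (X (p.2:ℕ) ω) x} with hN
  have hNnull : ℙ N = 0 := by
    rw [hN]
    apply measure_union_null
    · exact measure_iUnion_null (fun i => hnulli i 0)
    · apply measure_iUnion_null
      intro p
      by_cases hpq : (p.1:ℕ) = (p.2:ℕ)
      · have : {ω | (p.1:ℕ) ≠ (p.2:ℕ) ∧
            dsm θ (X (p.1:ℕ) ω) x = dsm θ (X (p.2:ℕ) ω) x} = ∅ := by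
          ext ω; simp [hpq]
        rw [this]; exact measure_empty
      · apply measure_mono_null (fun ω hω => hω.2)
        exact aux_pair_null (hdmeas _) (hdmeas _)
          (((hindep.indepFun hpq)).comp hgdmeas hgdmeas) (fun c => hnulli _ c)
  -- inclusion
  have hincl : {ω | HkNN X x n k θ ω ≤ t} ⊆ G ∪ N := by
    intro ω hω
    by_cases hωN : ω ∈ N
    · exact Or.inr hωN
    · left
      rw [hN] at hωN
      simp only [Set.mem_union, Set.mem_iUnion, Set.mem_setOf_eq, not_or,
        not_exists] at hωN
      obtain ⟨hω1, hω2⟩ := hωN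
      have hd0 : ∀ i ∈ Finset.range n, 0 < dsm θ (X i ω) x := by
        intro i hi
        rcases (hd0le i ω).eq_or_lt with h | h
        · exact absurd h.symm (hω1 ⟨i, Finset.mem_range.mp hi⟩)
        · exact h
      have hinjd : Set.InjOn (fun i => dsm θ (X i ω) x) (Finset.range n) := by
        intro i hi j hj hij
        by_contra hne
        have := hω2 (⟨i, by simpa using hi⟩, ⟨j, by simpa using hj⟩)
        simp only [Set.mem_setOf_eq, not_and] at this
        exact this hne hij
      have hcount := aux_count_of_inf_le hd0 hinjd hk1 hkn hω
      have hsum : (∑ i ∈ Finset.range n, (A i).indicator (fun _ => (1:ℝ))) ω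
          = ((@Finset.filter _ (fun i => dsm θ (X i ω) x ≤ t) (Classical.decPred _)
              (Finset.range n)).card : ℝ) := by
        rw [Finset.sum_apply, Finset.card_filter]
        push_cast
        apply Finset.sum_congr rfl
        intro i _
        by_cases h : dsm θ (X i ω) x ≤ t <;>
          simp [hA, Set.indicator_apply, Set.mem_setOf_eq, h]
      rw [hG, Set.mem_setOf_eq, hsum]
      exact_mod_cast le_trans hk₁k hcount
  -- Chernoff setup
  have hp : ∀ i, ℙ (A i) = ℙ (A 0) := by
    intro i
    rw [hA]
    show ℙ (X i ⁻¹' {v : H | dsm θ v x ≤ t}) = ℙ (X 0 ⁻¹' {v : H | dsm θ v x ≤ t})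
    rw [← Measure.map_apply (hXmeas i) hBt, ← Measure.map_apply (hXmeas 0) hBt,
      (hident i).map_eq]
  have hAindep : iIndepFun
      (fun i => (A i).indicator (fun _ => (1:ℝ))) ℙ := by
    have hcomp := hindep.comp
      (fun _ => ({v : H | dsm θ v x ≤ t}).indicator (fun _ => (1:ℝ)))
      (fun _ => measurable_const.indicator hBt)
    have heqf : (fun i => (A i).indicator (fun _ => (1:ℝ)))
        = fun i => ({v : H | dsm θ v x ≤ t}).indicator (fun _ => (1:ℝ)) ∘ X i := by
      funext i ω
      by_cases h : dsm θ (X i ω) x ≤ t <;>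
        simp [hA, Set.indicator_apply, Set.mem_setOf_eq, h, Function.comp]
    rw [heqf]
    exact hcomp
  have hq : (n : ℝ) * (ℙ (A 0)).toReal ≤ ρ * (k₁ : ℝ) := by
    have hphi : (ℙ (A 0)).toReal = phiSB X x θ t := rfl
    rw [hphi]
    have hn0 : (0:ℝ) < n := by exact_mod_cast hn
    calc (n : ℝ) * phiSB X x θ t ≤ (n:ℝ) * u := by
          exact mul_le_mul_of_nonneg_left hphit hn0.le
      _ = ρ * (k₁ : ℝ) := by rw [hu]; field_simp
  obtain ⟨c, hc, hcase⟩ := aux_chernoff_exponent hρ0 hρ1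
  have hcher := aux_chernoff n k₁ A hAmeas hAindep hp c hc (ρ * (k₁:ℝ)) hq
  -- final numeric bound
  have hk₁0 : (0:ℝ) ≤ (k₁ : ℝ) := Nat.cast_nonneg _
  have hexp : Real.exp (ρ * (k₁:ℝ) * (Real.exp c - 1) - c * k₁)
      ≤ Real.exp (-((1 - ρ) * (k₁ : ℝ)) / 4) +
        Real.exp (-((1 - ρ) ^ 2 * (k₁ : ℝ)) / (4 * ρ)) := by
    rcases hcase with h1 | h1
    · have h2 : ρ * (k₁:ℝ) * (Real.exp c - 1) - c * k₁ ≤ -((1 - ρ) * (k₁ : ℝ)) / 4 :=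
        calc ρ * (k₁:ℝ) * (Real.exp c - 1) - c * k₁
            = (k₁:ℝ) * (ρ * (Real.exp c - 1) - c) := by ring
          _ ≤ (k₁:ℝ) * -((1 - ρ) / 4) := mul_le_mul_of_nonneg_left h1 hk₁0
          _ = -((1 - ρ) * (k₁ : ℝ)) / 4 := by ring
      have := Real.exp_le_exp.mpr h2
      nlinarith [Real.exp_pos (-((1 - ρ) ^ 2 * (k₁ : ℝ)) / (4 * ρ))]
    · have h2 : ρ * (k₁:ℝ) * (Real.exp c - 1) - c * k₁
          ≤ -((1 - ρ) ^ 2 * (k₁ : ℝ)) / (4 * ρ) :=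
        calc ρ * (k₁:ℝ) * (Real.exp c - 1) - c * k₁
            = (k₁:ℝ) * (ρ * (Real.exp c - 1) - c) := by ring
          _ ≤ (k₁:ℝ) * -((1 - ρ) ^ 2 / (4 * ρ)) := mul_le_mul_of_nonneg_left h1 hk₁0
          _ = -((1 - ρ) ^ 2 * (k₁ : ℝ)) / (4 * ρ) := by ring
      have := Real.exp_le_exp.mpr h2
      nlinarith [Real.exp_pos (-((1 - ρ) * (k₁ : ℝ)) / 4)]
  calc ℙ {ω | HkNN X x n k θ ω ≤ phiInv X x θ (ρ * (k₁ : ℝ) / n)}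
      ≤ ℙ (G ∪ N) := measure_mono hincl
    _ ≤ ℙ G + ℙ N := measure_union_le _ _
    _ = ℙ G := by rw [hNnull, add_zero]
    _ ≤ ENNReal.ofReal (Real.exp (-((1 - ρ) * (k₁ : ℝ)) / 4) +
        Real.exp (-((1 - ρ) ^ 2 * (k₁ : ℝ)) / (4 * ρ))) := by
        rw [← ENNReal.ofReal_toReal (measure_ne_top ℙ G)]
        exact ENNReal.ofReal_le_ofReal (le_trans hcher hexp)


end
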